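/- Let μ₃⁻¹ denote the Dirichlet inverse of the rank-3 Möbius function μ₃, and for n = p₁^{m₁}⋯p_k^{m_k} put m_*(n) = #{ j : m_j ≡ 3 or 4 (mod 6) }. Then for every real s > 1, ∑_{n=1}^∞ μ₃⁻¹(n)/n^s = ∑_n (−1)^{m_*(n)} / n^s, where the right-hand sum runs over positive integers n all of whose prime exponents are ≢ 2 and ≢ 5 (mod 6); equivalently, (∑_{n=1}^∞ μ₃(n)/n^s)⁻¹ equals that right-hand sum. -/

import Mathlib

open scoped Classical

/-- The Möbius function of rank `r`:  `μ_r(n) = (-1)^Ω(n)` if `n` is `r`-free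
(no prime `p` has `p^r ∣ n`), and `0` otherwise. -/
noncomputable def muR (r n : ℕ) : ℤ :=
  if ∀ p : ℕ, p.Prime → ¬ p ^ r ∣ n then (-1) ^ (ArithmeticFunction.cardFactors n) else 0

/-- `m_*(n)` is the number of primes `p` whose exponent in `n` is `≡ 3` or `4`
modulo `6`. -/
def mStar (n : ℕ) : ℕ :=
  (n.primeFactors.filter
    (fun p => n.factorization p % 6 = 3 ∨ n.factorization p % 6 = 4)).card

private lemma muR_zero : muR 3 0 = 0 := by
  rw [muR, if_neg]
  push_neg
  exact ⟨2, Nat.prime_two, ⟨0, rfl⟩⟩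

private lemma muR_one : muR 3 1 = 1 := by
  rw [muR, if_pos]
  · simp
  · intro p hp hd
    have h1 : p ^ 3 = 1 := Nat.eq_one_of_dvd_one hd
    have h2 : 2 ^ 3 ≤ p ^ 3 := Nat.pow_le_pow_left hp.two_le 3
    omega

private lemma muR_prime_pow {p : ℕ} (hp : p.Prime) (i : ℕ) :
    muR 3 (p ^ i) = if i ≤ 2 then (-1) ^ i else 0 := by
  rw [muR, ArithmeticFunction.cardFactors_apply_prime_pow hp]
  by_cases h : i ≤ 2
  · rw [if_pos, if_pos h]
    intro q hq hd
    have hq' : q ∣ p ^ i := dvd_trans (dvd_pow_self q (by norm_num)) hd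
    have hqp : q = p := (Nat.prime_dvd_prime_iff_eq hq hp).mp (hq.dvd_of_dvd_pow hq')
    subst hqp
    have := (Nat.pow_dvd_pow_iff_le_right hq.one_lt).mp hd
    omega
  · rw [if_neg h, if_neg]
    push_neg
    exact ⟨p, hp, pow_dvd_pow p (by omega)⟩

private lemma not_dvd_right_of_coprime {m n p : ℕ} (hmn : m.Coprime n) (hp : p.Prime)
    (hpm : p ∣ m) : ¬ p ∣ n := fun hpn =>
  hp.ne_one (Nat.eq_one_of_dvd_one (hmn ▸ Nat.dvd_gcd hpm hpn))

private lemma muR_mul {m n : ℕ} (hmn : m.Coprime n) :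
    muR 3 (m * n) = muR 3 m * muR 3 n := by
  rcases eq_or_ne m 0 with rfl | hm
  · rw [Nat.coprime_zero_left] at hmn; subst hmn; simp [muR_zero, muR_one]
  rcases eq_or_ne n 0 with rfl | hn
  · rw [Nat.coprime_zero_right] at hmn; subst hmn; simp [muR_zero, muR_one]
  have hcond : (∀ p : ℕ, p.Prime → ¬ p ^ 3 ∣ m * n) ↔
      ((∀ p : ℕ, p.Prime → ¬ p ^ 3 ∣ m) ∧ (∀ p : ℕ, p.Prime → ¬ p ^ 3 ∣ n)) := by
    constructor
    · intro h
      exact ⟨fun p hp hd => h p hp (hd.mul_right n), fun p hp hd => h p hp (hd.mul_left m)⟩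
    · rintro ⟨h1, h2⟩ p hp hd
      rw [hp.pow_dvd_iff_le_factorization (mul_ne_zero hm hn),
        Nat.factorization_mul hm hn, Finsupp.add_apply] at hd
      rcases Nat.eq_zero_or_pos (m.factorization p) with h0 | hpos
      · exact h2 p hp ((hp.pow_dvd_iff_le_factorization hn).mpr (by omega))
      · have hpm : p ∣ m := Nat.dvd_of_factorization_pos (by omega)
        have hnp : n.factorization p = 0 :=
          Nat.factorization_eq_zero_of_not_dvd (not_dvd_right_of_coprime hmn hp hpm)
        exact h1 p hp ((hp.pow_dvd_iff_le_factorization hm).mpr (by omega))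
  by_cases hc : (∀ p : ℕ, p.Prime → ¬ p ^ 3 ∣ m) ∧ (∀ p : ℕ, p.Prime → ¬ p ^ 3 ∣ n)
  · rw [muR, muR, muR, if_pos hc.1, if_pos hc.2, if_pos (hcond.mpr hc),
      ArithmeticFunction.cardFactors_mul hm hn, pow_add]
  · rw [muR, if_neg (fun h => hc (hcond.mp h))]
    rcases not_and_or.mp hc with h | h
    · rw [show muR 3 m = 0 from by rw [muR, if_neg h], zero_mul]
    · rw [show muR 3 n = 0 from by rw [muR, if_neg h], mul_zero]

/-- Euler-factor coefficients of the inverse of `μ₃`. -/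
noncomputable def cc (k : ℕ) : ℝ :=
  if k % 6 = 2 ∨ k % 6 = 5 then 0 else if k % 6 = 3 ∨ k % 6 = 4 then -1 else 1

/-- Candidate Dirichlet inverse of `μ₃`. -/
noncomputable def hh (n : ℕ) : ℝ :=
  if n = 0 then 0 else ∏ p ∈ n.primeFactors, cc (n.factorization p)

private lemma hh_one : hh 1 = 1 := by simp [hh]

private lemma hh_mul {m n : ℕ} (hm : m ≠ 0) (hn : n ≠ 0) (hmn : m.Coprime n) :
    hh (m * n) = hh m * hh n := by
  simp only [hh, if_neg hm, if_neg hn, if_neg (mul_ne_zero hm hn)]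
  rw [Nat.primeFactors_mul hm hn, Finset.prod_union hmn.disjoint_primeFactors]
  congr 1
  · refine Finset.prod_congr rfl fun p hp => ?_
    rw [Nat.factorization_mul hm hn, Finsupp.add_apply,
      Nat.factorization_eq_zero_of_not_dvd
        (not_dvd_right_of_coprime hmn (Nat.prime_of_mem_primeFactors hp)
          (Nat.dvd_of_mem_primeFactors hp)), add_zero]
  · refine Finset.prod_congr rfl fun p hp => ?_
    rw [Nat.factorization_mul hm hn, Finsupp.add_apply,
      Nat.factorization_eq_zero_of_not_dvd
        (not_dvd_right_of_coprime hmn.symm (Nat.prime_of_mem_primeFactors hp)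
          (Nat.dvd_of_mem_primeFactors hp)), zero_add]

private lemma hh_prime_pow {p : ℕ} (hp : p.Prime) (k : ℕ) : hh (p ^ k) = cc k := by
  rcases Nat.eq_zero_or_pos k with rfl | hk
  · rw [pow_zero, hh_one]; simp [cc]
  · rw [hh, if_neg (pow_ne_zero k hp.pos.ne')]
    rw [Nat.primeFactors_pow p hk.ne', hp.primeFactors, Finset.prod_singleton,
      hp.factorization_pow, Finsupp.single_eq_same]

/-- `μ₃` as a real-valued arithmetic function. -/
noncomputable def Mf : ArithmeticFunction ℝ :=
  ⟨fun n => (muR 3 n : ℝ), by simp [muR_zero]⟩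

/-- `hh` as an arithmetic function. -/
noncomputable def Hf : ArithmeticFunction ℝ := ⟨hh, by simp [hh]⟩

private lemma Mf_mult : Mf.IsMultiplicative := by
  constructor
  · show ((muR 3 1 : ℤ) : ℝ) = 1
    rw [muR_one]; norm_num
  · intro m n hmn
    show ((muR 3 (m * n) : ℤ) : ℝ) = (muR 3 m : ℝ) * (muR 3 n : ℝ)
    rw [muR_mul hmn]; push_cast; ring

private lemma Hf_mult : Hf.IsMultiplicative := by
  constructor
  · exact hh_one
  · intro m n hmn
    show hh (m * n) = hh m * hh n
    rcases eq_or_ne m 0 with rfl | hm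
    · simp [hh]
    rcases eq_or_ne n 0 with rfl | hn
    · simp [hh]
    exact hh_mul hm hn hmn

private lemma cc_rec (m : ℕ) : cc (m + 2) - cc (m + 1) + cc m = 0 := by
  obtain ⟨r, hr6, hr⟩ : ∃ r, r < 6 ∧ m % 6 = r := ⟨m % 6, Nat.mod_lt _ (by norm_num), rfl⟩
  have h1 : (m + 1) % 6 = (r + 1) % 6 := by omega
  have h2 : (m + 2) % 6 = (r + 2) % 6 := by omega
  unfold cc
  rw [h1, h2, hr]
  interval_cases r <;> norm_num

private lemma MH_eq_one : Mf * Hf = 1 := by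
  rw [ArithmeticFunction.IsMultiplicative.eq_iff_eq_on_prime_powers _ (Mf_mult.mul Hf_mult) _
    ArithmeticFunction.isMultiplicative_one]
  intro p i hp
  rw [ArithmeticFunction.mul_apply,
    Nat.sum_divisorsAntidiagonal (fun d e => Mf d * Hf e),
    Nat.sum_divisors_prime_pow hp, ArithmeticFunction.one_apply]
  have hterm : ∀ j ≤ i, Mf (p ^ j) * Hf (p ^ i / p ^ j)
      = (if j ≤ 2 then (-1 : ℝ) ^ j else 0) * cc (i - j) := by
    intro j hj
    have : p ^ i / p ^ j = p ^ (i - j) := by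
      rw [Nat.pow_div hj hp.pos]
    rw [this]
    show ((muR 3 (p ^ j) : ℤ) : ℝ) * hh (p ^ (i - j)) = _
    rw [muR_prime_pow hp, hh_prime_pow hp]
    split <;> push_cast <;> ring
  rw [Finset.sum_congr rfl (fun j hj => hterm j (by
    simpa using Nat.lt_succ_iff.mp (Finset.mem_range.mp hj)))]
  have hne : p ^ i = 1 ↔ i = 0 := by
    constructor
    · intro h
      by_contra hi
      have h2 : p ≤ p ^ i := Nat.le_self_pow hi p
      have := hp.two_le
      omega
    · rintro rfl; rw [pow_zero]
  match i with
  | 0 => simp [cc]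
  | 1 =>
    rw [if_neg (by rw [hne]; omega)]
    rw [Finset.sum_range_succ, Finset.sum_range_one]
    norm_num [cc]
  | (m + 2) =>
    rw [if_neg (by rw [hne]; omega)]
    have hsub : Finset.range 3 ⊆ Finset.range (m + 2 + 1) :=
      Finset.range_subset_range.mpr (by omega)
    rw [← Finset.sum_subset hsub (fun x _ hx => by
      rw [if_neg (by simp at hx; omega), zero_mul])]
    rw [Finset.sum_range_succ, Finset.sum_range_succ, Finset.sum_range_one]
    norm_num
    have h0 : m + 2 - 0 = m + 2 := by omega
    have h1 : m + 2 - 1 = m + 1 := by omega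
    have := cc_rec m
    linarith [cc_rec m]

private lemma conv_eq (n : ℕ) (hn : 0 < n) :
    (∑ d ∈ n.divisors, (muR 3 d : ℝ) * hh (n / d)) = if n = 1 then 1 else 0 := by
  have h1 : (Mf * Hf) n = (1 : ArithmeticFunction ℝ) n := by rw [MH_eq_one]
  rw [ArithmeticFunction.mul_apply, Nat.sum_divisorsAntidiagonal (fun d e => Mf d * Hf e),
    ArithmeticFunction.one_apply] at h1
  exact h1

private lemma hh_eq (n : ℕ) :
    hh n = if 0 < n ∧ ∀ p : ℕ, p.Prime → n.factorization p % 6 ≠ 2 ∧ n.factorization p % 6 ≠ 5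
      then (-1 : ℝ) ^ mStar n else 0 := by
  rcases eq_or_ne n 0 with rfl | hn
  · simp [hh]
  by_cases hc : ∀ p : ℕ, p.Prime → n.factorization p % 6 ≠ 2 ∧ n.factorization p % 6 ≠ 5
  · rw [if_pos ⟨Nat.pos_of_ne_zero hn, hc⟩, hh, if_neg hn, mStar]
    have : ∀ p ∈ n.primeFactors, cc (n.factorization p)
        = (if n.factorization p % 6 = 3 ∨ n.factorization p % 6 = 4 then (-1 : ℝ) else 1) := by
      intro p hp
      have h := hc p (Nat.prime_of_mem_primeFactors hp)
      unfold cc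
      rw [if_neg (by tauto)]
    rw [Finset.prod_congr rfl this, Finset.prod_ite, Finset.prod_const, Finset.prod_const,
      one_pow, mul_one]
  · rw [if_neg (by tauto)]
    push_neg at hc
    obtain ⟨p, hp, hcp⟩ := hc
    by_cases h2 : n.factorization p % 6 = 2
    case neg =>
      have h5 := hcp h2
      have hpf : p ∈ n.primeFactors :=
        Nat.mem_primeFactors.mpr ⟨hp, Nat.dvd_of_factorization_pos (by omega), hn⟩
      rw [hh, if_neg hn]
      exact Finset.prod_eq_zero hpf (by unfold cc; rw [if_pos (Or.inr h5)])
    case pos =>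
      have hpf : p ∈ n.primeFactors :=
        Nat.mem_primeFactors.mpr ⟨hp, Nat.dvd_of_factorization_pos (by omega), hn⟩
      rw [hh, if_neg hn]
      exact Finset.prod_eq_zero hpf (by unfold cc; rw [if_pos (Or.inl h2)])

/-- Möbius inversion of rank 3: if `g` is the Dirichlet inverse of `μ₃`
(i.e. `∑_{d ∣ n} μ₃(d)·g(n/d) = [n = 1]` for all `n ≥ 1`), then for every real
`s > 1`, `∑ g(n)/n^s` equals `∑ (-1)^{m_*(n)}/n^s`, the latter sum running over
positive integers all of whose prime exponents are `≢ 2, 5 (mod 6)`;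
equivalently `(∑ μ₃(n)/n^s)⁻¹` equals that sum. -/
theorem mu3_inversion (g : ℕ → ℝ)
    (hg : ∀ n : ℕ, 0 < n →
      (∑ d ∈ n.divisors, (muR 3 d : ℝ) * g (n / d)) = if n = 1 then 1 else 0)
    (s : ℝ) (hs : 1 < s) :
    (∑' n : ℕ, g n / (n : ℝ) ^ s)
        = (∑' n : {n : ℕ // 0 < n ∧ ∀ p : ℕ, p.Prime →
              n.factorization p % 6 ≠ 2 ∧ n.factorization p % 6 ≠ 5},
            ((-1 : ℝ) ^ mStar (n : ℕ)) / ((n : ℕ) : ℝ) ^ s) ∧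
      (∑' n : ℕ, (muR 3 n : ℝ) / (n : ℝ) ^ s)⁻¹
        = (∑' n : {n : ℕ // 0 < n ∧ ∀ p : ℕ, p.Prime →
              n.factorization p % 6 ≠ 2 ∧ n.factorization p % 6 ≠ 5},
            ((-1 : ℝ) ^ mStar (n : ℕ)) / ((n : ℕ) : ℝ) ^ s) := by
  have hs0 : s ≠ 0 := by linarith
  have hzero : (0 : ℝ) ^ s = 0 := Real.zero_rpow hs0
  have hge : ∀ n : ℕ, 0 < n → g n = hh n := by
    intro n
    induction n using Nat.strong_induction_on with
    | _ n ih =>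
      intro hn
      rcases eq_or_ne n 1 with rfl | hn1
      · have h1 := hg 1 one_pos
        rw [Nat.divisors_one, Finset.sum_singleton, if_pos rfl, muR_one] at h1
        rw [hh_one]
        simpa using h1
      · have key : ∀ f : ℕ → ℝ, (∑ d ∈ n.divisors, (muR 3 d : ℝ) * f (n / d)) = 0 →
            f n = - ∑ d ∈ n.divisors.erase 1, (muR 3 d : ℝ) * f (n / d) := by
          intro f hf
          rw [← Finset.add_sum_erase _ _ (Nat.one_mem_divisors.mpr hn.ne'), muR_one,
            Nat.div_one] at hf
          push_cast at hf
          linarith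
        have hgn := key g (by rw [hg n hn, if_neg hn1])
        have hhn := key hh (by rw [conv_eq n hn, if_neg hn1])
        rw [hgn, hhn]
        congr 1
        refine Finset.sum_congr rfl fun d hd => ?_
        rw [Finset.mem_erase, Nat.mem_divisors] at hd
        obtain ⟨hd1, hdvd, -⟩ := hd
        have hdpos : 0 < d := Nat.pos_of_dvd_of_pos hdvd hn
        have hlt : n / d < n := Nat.div_lt_self hn (by omega)
        have hpos : 0 < n / d := Nat.div_pos (Nat.le_of_dvd hn hdvd) hdpos
        rw [ih _ hlt hpos]
  have hsub : ∀ f : ℕ → ℝ, (∀ n : ℕ, 0 < n → f n = hh n) →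
      (∑' n : ℕ, f n / (n : ℝ) ^ s)
        = (∑' n : {n : ℕ // 0 < n ∧ ∀ p : ℕ, p.Prime →
              n.factorization p % 6 ≠ 2 ∧ n.factorization p % 6 ≠ 5},
            ((-1 : ℝ) ^ mStar (n : ℕ)) / ((n : ℕ) : ℝ) ^ s) := by
    intro f hf
    rw [show (∑' n : {n : ℕ // 0 < n ∧ ∀ p : ℕ, p.Prime →
          n.factorization p % 6 ≠ 2 ∧ n.factorization p % 6 ≠ 5},
        ((-1 : ℝ) ^ mStar (n : ℕ)) / ((n : ℕ) : ℝ) ^ s)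
      = ∑' n : ℕ, Set.indicator {n : ℕ | 0 < n ∧ ∀ p : ℕ, p.Prime →
          n.factorization p % 6 ≠ 2 ∧ n.factorization p % 6 ≠ 5}
          (fun n => ((-1 : ℝ) ^ mStar n) / (n : ℝ) ^ s) n
      from tsum_subtype {n : ℕ | 0 < n ∧ ∀ p : ℕ, p.Prime →
          n.factorization p % 6 ≠ 2 ∧ n.factorization p % 6 ≠ 5}
        (fun n => ((-1 : ℝ) ^ mStar n) / (n : ℝ) ^ s)]
    refine tsum_congr fun n => ?_
    rcases eq_or_ne n 0 with rfl | hn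
    · rw [Set.indicator_of_notMem (by simp), Nat.cast_zero, hzero, div_zero]
    · rw [hf n (Nat.pos_of_ne_zero hn), hh_eq]
      by_cases hmem : n ∈ {n : ℕ | 0 < n ∧ ∀ p : ℕ, p.Prime →
          n.factorization p % 6 ≠ 2 ∧ n.factorization p % 6 ≠ 5}
      · rw [Set.indicator_of_mem hmem]
        simp only [Set.mem_setOf_eq] at hmem
        rw [if_pos hmem]
      · rw [Set.indicator_of_notMem hmem]
        simp only [Set.mem_setOf_eq] at hmem
        rw [if_neg hmem, zero_div]
  have habs_f : ∀ n : ℕ, ‖((muR 3 n : ℝ) : ℂ)‖ ≤ 1 := by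
    intro n
    rw [Complex.norm_real, Real.norm_eq_abs]
    have h3 : muR 3 n = 0 ∨ muR 3 n = 1 ∨ muR 3 n = -1 := by
      unfold muR
      split
      · rcases Nat.even_or_odd (ArithmeticFunction.cardFactors n) with h | h
        · right; left; exact h.neg_one_pow
        · right; right; exact h.neg_one_pow
      · left; rfl
    rcases h3 with h | h | h <;> rw [h] <;> norm_num
  have habs_h : ∀ n : ℕ, ‖((hh n : ℝ) : ℂ)‖ ≤ 1 := by
    intro n
    rw [Complex.norm_real, Real.norm_eq_abs, hh_eq]
    split
    · rw [abs_pow, abs_neg, abs_one, one_pow]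
    · norm_num
  have hfS : LSeriesSummable (fun n => ((muR 3 n : ℝ) : ℂ)) s :=
    LSeriesSummable_of_bounded_of_one_lt_real (fun n _ => habs_f n) hs
  have hhS : LSeriesSummable (fun n => ((hh n : ℝ) : ℂ)) s :=
    LSeriesSummable_of_bounded_of_one_lt_real (fun n _ => habs_h n) hs
  have hconv : LSeries.convolution (fun n => ((muR 3 n : ℝ) : ℂ)) (fun n => ((hh n : ℝ) : ℂ))
      = LSeries.delta := by
    funext n
    rcases eq_or_ne n 0 with rfl | hn
    · rw [LSeries.convolution_map_zero]; rfl
    · have hcd := congrFun (LSeries.convolution_def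
        (fun n => ((muR 3 n : ℝ) : ℂ)) (fun n => ((hh n : ℝ) : ℂ))) n
      rw [hcd]
      calc (∑ p ∈ n.divisorsAntidiagonal, ((muR 3 p.1 : ℝ) : ℂ) * ((hh p.2 : ℝ) : ℂ))
          = ((∑ d ∈ n.divisors, (muR 3 d : ℝ) * hh (n / d) : ℝ) : ℂ) := by
            rw [Nat.sum_divisorsAntidiagonal
              (fun d e => ((muR 3 d : ℝ) : ℂ) * ((hh e : ℝ) : ℂ))]
            push_cast
            rfl
        _ = LSeries.delta n := by
            rw [conv_eq n (Nat.pos_of_ne_zero hn), LSeries.delta]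
            split <;> simp
  have hLf : LSeries (fun n => ((muR 3 n : ℝ) : ℂ)) s
      = ((∑' n : ℕ, (muR 3 n : ℝ) / (n : ℝ) ^ s : ℝ) : ℂ) := by
    rw [Complex.ofReal_tsum]
    unfold LSeries
    refine tsum_congr fun n => ?_
    rcases eq_or_ne n 0 with rfl | hn
    · rw [LSeries.term_zero, Nat.cast_zero, hzero, div_zero, Complex.ofReal_zero]
    · rw [LSeries.term_of_ne_zero hn, Complex.ofReal_div,
        Complex.ofReal_cpow (Nat.cast_nonneg n)]
      norm_num
  have hLh : LSeries (fun n => ((hh n : ℝ) : ℂ)) s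
      = ((∑' n : ℕ, hh n / (n : ℝ) ^ s : ℝ) : ℂ) := by
    rw [Complex.ofReal_tsum]
    unfold LSeries
    refine tsum_congr fun n => ?_
    rcases eq_or_ne n 0 with rfl | hn
    · rw [LSeries.term_zero, Nat.cast_zero, hzero, div_zero, Complex.ofReal_zero]
    · rw [LSeries.term_of_ne_zero hn, Complex.ofReal_div,
        Complex.ofReal_cpow (Nat.cast_nonneg n)]
      norm_num
  have hmul := LSeries_convolution' hfS hhS
  rw [hconv, LSeries_delta, Pi.one_apply, hLf, hLh] at hmul
  have hAB : (∑' n : ℕ, (muR 3 n : ℝ) / (n : ℝ) ^ s)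
      * (∑' n : ℕ, hh n / (n : ℝ) ^ s) = 1 := by
    exact_mod_cast hmul.symm
  constructor
  · exact hsub g hge
  · rw [← hsub hh (fun n _ => rfl)]
    exact inv_eq_of_mul_eq_one_right hAB
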